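/- If h : ℝ^N → ℂ is bounded, continuously differentiable, and each partial derivative ∂_j h has vanishing oscillation, then each ∂_j h vanishes at infinity. -/

import Mathlib

open Filter

/-- If `h : ℝ^N → ℂ` is bounded and C¹ and each partial derivative `∂ⱼ h` is a
bounded uniformly continuous function with vanishing oscillation, then each
`∂ⱼ h` vanishes at infinity. -/
theorem stmt2 {N : ℕ} (h : EuclideanSpace ℝ (Fin N) → ℂ)
    (hbdd : ∃ C : ℝ, ∀ y, ‖h y‖ ≤ C)
    (hdiff : ContDiff ℝ 1 h)
    (hdbdd : ∀ j : Fin N, ∃ C : ℝ, ∀ y,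
      ‖fderiv ℝ h y (EuclideanSpace.single j 1)‖ ≤ C)
    (hduc : ∀ j : Fin N,
      UniformContinuous (fun y => fderiv ℝ h y (EuclideanSpace.single j 1)))
    (hVO : ∀ j : Fin N, ∀ x : EuclideanSpace ℝ (Fin N),
      Tendsto (fun y => fderiv ℝ h (y + x) (EuclideanSpace.single j 1)
          - fderiv ℝ h y (EuclideanSpace.single j 1))
        (cocompact (EuclideanSpace ℝ (Fin N))) (nhds 0)) :
    ∀ j : Fin N,
      Tendsto (fun y => fderiv ℝ h y (EuclideanSpace.single j 1))
        (cocompact (EuclideanSpace ℝ (Fin N))) (nhds 0) := by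
  intro j
  obtain ⟨C, hC⟩ := hbdd
  have hC0 : 0 ≤ C := le_trans (norm_nonneg _) (hC 0)
  set e : EuclideanSpace ℝ (Fin N) := EuclideanSpace.single j 1 with he
  have hene : ‖e‖ = 1 := by simp [he, EuclideanSpace.norm_single]
  set g : EuclideanSpace ℝ (Fin N) → ℂ := fun y => fderiv ℝ h y e with hg
  have hgc : Continuous g := (hduc j).continuous
  rw [NormedAddCommGroup.tendsto_nhds_zero]
  intro ε hε
  set T : ℝ := (4 * C + 1) / ε with hT
  have hT0 : 0 < T := by positivity
  obtain ⟨η, hη0, hηuc⟩ := Metric.uniformContinuous_iff.mp (hduc j) (ε / 4) (by positivity)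
  set n : ℕ := ⌈T / (η / 2)⌉₊ with hn
  have hnet : ∀ᶠ y in cocompact (EuclideanSpace ℝ (Fin N)),
      ∀ i ∈ Finset.range (n + 1), ‖g (y + ((i : ℝ) * (η / 2)) • e) - g y‖ < ε / 4 := by
    rw [eventually_all_finset]
    intro i _
    exact (NormedAddCommGroup.tendsto_nhds_zero.mp (hVO j (((i : ℝ) * (η / 2)) • e)))
      (ε / 4) (by positivity)
  filter_upwards [hnet] with y hy
  -- uniform estimate on [0, T]
  have hstep : ∀ s ∈ Set.Icc (0 : ℝ) T, ‖g (y + s • e) - g y‖ ≤ ε / 2 := by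
    intro s hs
    set i : ℕ := ⌊s / (η / 2)⌋₊ with hi
    have hηh : (0 : ℝ) < η / 2 := by positivity
    have hin : i ∈ Finset.range (n + 1) := by
      rw [Finset.mem_range, Nat.lt_succ_iff, hi, hn]
      have h1 : s / (η / 2) ≤ T / (η / 2) := (div_le_div_iff_of_pos_right hηh).mpr hs.2
      exact le_trans (Nat.floor_le_floor h1) (Nat.floor_le_ceil _)
    have hile : (i : ℝ) * (η / 2) ≤ s := by
      have h1 : (i : ℝ) ≤ s / (η / 2) := Nat.floor_le (div_nonneg hs.1 hηh.le)
      calc (i : ℝ) * (η / 2) ≤ (s / (η / 2)) * (η / 2) :=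
            mul_le_mul_of_nonneg_right h1 hηh.le
        _ = s := by field_simp
    have hilt : s < ((i : ℝ) + 1) * (η / 2) := by
      have h1 : s / (η / 2) < (i : ℝ) + 1 := Nat.lt_floor_add_one (s / (η / 2))
      calc s = (s / (η / 2)) * (η / 2) := by field_simp
        _ < ((i : ℝ) + 1) * (η / 2) := mul_lt_mul_of_pos_right h1 hηh
    have hdist : dist (y + s • e) (y + ((i : ℝ) * (η / 2)) • e) < η := by
      rw [dist_eq_norm]
      have heq : (y + s • e) - (y + ((i : ℝ) * (η / 2)) • e)
          = (s - (i : ℝ) * (η / 2)) • e := by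
        rw [sub_smul]; abel
      rw [heq, norm_smul, hene, mul_one, Real.norm_eq_abs, abs_of_nonneg (by linarith)]
      linarith
    have h1 : ‖g (y + s • e) - g (y + ((i : ℝ) * (η / 2)) • e)‖ < ε / 4 := by
      have := hηuc hdist
      rwa [dist_eq_norm] at this
    have h2 := hy i hin
    calc ‖g (y + s • e) - g y‖
        ≤ ‖g (y + s • e) - g (y + ((i : ℝ) * (η / 2)) • e)‖
          + ‖g (y + ((i : ℝ) * (η / 2)) • e) - g y‖ :=
          norm_sub_le_norm_sub_add_norm_sub _ _ _
      _ ≤ ε / 4 + ε / 4 := by linarith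
      _ = ε / 2 := by ring
  -- FTC along the line
  have hderiv : ∀ t : ℝ, HasDerivAt (fun t : ℝ => h (y + t • e)) (g (y + t • e)) t := by
    intro t
    have hL : HasDerivAt (fun t : ℝ => y + t • e) e t := by
      simpa using ((hasDerivAt_id t).smul_const e).const_add y
    have hf := (hdiff.differentiable one_ne_zero (y + t • e)).hasFDerivAt
    exact hf.comp_hasDerivAt t hL
  have hcont : Continuous fun s : ℝ => g (y + s • e) :=
    hgc.comp (continuous_const.add (continuous_id.smul continuous_const))
  have hint : ∫ s in (0 : ℝ)..T, g (y + s • e)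
      = h (y + T • e) - h (y + (0 : ℝ) • e) :=
    intervalIntegral.integral_eq_sub_of_hasDerivAt
      (f := fun t : ℝ => h (y + t • e)) (f' := fun s : ℝ => g (y + s • e))
      (fun t _ => hderiv t) (hcont.intervalIntegrable 0 T)
  have hsub : T • g y = (h (y + T • e) - h (y + (0 : ℝ) • e))
      - ∫ s in (0 : ℝ)..T, (g (y + s • e) - g y) := by
    rw [intervalIntegral.integral_sub (hcont.intervalIntegrable 0 T)
      intervalIntegrable_const, hint, intervalIntegral.integral_const,
      sub_sub_cancel, sub_zero]
  have hTg : T * ‖g y‖ ≤ 2 * C + T * (ε / 2) := by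
    have hi1 : ‖h (y + T • e) - h (y + (0 : ℝ) • e)‖ ≤ 2 * C := by
      calc ‖h (y + T • e) - h (y + (0 : ℝ) • e)‖
          ≤ ‖h (y + T • e)‖ + ‖h (y + (0 : ℝ) • e)‖ := norm_sub_le _ _
        _ ≤ C + C := add_le_add (hC _) (hC _)
        _ = 2 * C := by ring
    have hi2 : ‖∫ s in (0 : ℝ)..T, (g (y + s • e) - g y)‖ ≤ (ε / 2) * |T - 0| := by
      apply intervalIntegral.norm_integral_le_of_norm_le_const
      intro s hsm
      rw [Set.uIoc_of_le hT0.le] at hsm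
      exact hstep s ⟨hsm.1.le, hsm.2⟩
    rw [sub_zero, abs_of_pos hT0] at hi2
    have hnorm : ‖T • g y‖ = T * ‖g y‖ := by
      rw [norm_smul, Real.norm_eq_abs, abs_of_pos hT0]
    calc T * ‖g y‖ = ‖T • g y‖ := hnorm.symm
      _ ≤ ‖h (y + T • e) - h (y + (0 : ℝ) • e)‖
          + ‖∫ s in (0 : ℝ)..T, (g (y + s • e) - g y)‖ := by
          rw [hsub]; exact norm_sub_le _ _
      _ ≤ 2 * C + (ε / 2) * T := add_le_add hi1 hi2
      _ = 2 * C + T * (ε / 2) := by ring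
  have hTε : T * ε = 4 * C + 1 := by rw [hT]; field_simp
  have hlt : T * ‖g y‖ < T * ε := by nlinarith
  exact lt_of_mul_lt_mul_left hlt hT0.le
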